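/- arXiv:1012.3768 — 6 statements merged into one kernel-verified Lean document; each statement's English description precedes it below -/
import Mathlib

section
/- Fix constants 0 < a < ∞ and 0 < δ < ω < 1. Define f : [0,1] → ℝ by f(p) = ap for p ∈ [0, (1-ω)/a) and f(p) = (1-ω) + F(p - (1-ω)/a) for p ∈ [(1-ω)/a, 1], where F(p) = δ∫_0^{ap/δ} e^{-t²} dt. Then f is twice continuously differentiable on [0,1], takes values in [0, 1-ω+δ] ⊂ [0,1), is concave, and satisfies |f''(p)| ≤ a²√2/(δ√e) for all p. -/
open Real Set Filter MeasureTheory intervalIntegral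

/-- auxiliary: x ↦ (max x 0)^2 -/
noncomputable def mtfMaxsq (x : ℝ) : ℝ := max x 0 ^ 2

lemma mtfMaxsq_hasDerivAt (x : ℝ) : HasDerivAt mtfMaxsq (2 * max x 0) x := by
  rcases lt_trichotomy x 0 with hx | hx | hx
  · have h : HasDerivAt (fun _ : ℝ => (0:ℝ)) (2 * max x 0) x := by
      simpa [max_eq_right hx.le] using (hasDerivAt_const x (0:ℝ))
    apply h.congr_of_eventuallyEq
    filter_upwards [eventually_lt_nhds hx] with y hy
    simp [mtfMaxsq, max_eq_right hy.le]
  · subst hx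
    rw [hasDerivAt_iff_tendsto_slope]
    have h : Tendsto (fun y : ℝ => max y 0) (nhdsWithin 0 {(0:ℝ)}ᶜ) (nhds (2 * max (0:ℝ) 0)) := by
      have : Continuous fun y : ℝ => max y 0 := continuous_id.max continuous_const
      simpa using (this.tendsto 0).mono_left nhdsWithin_le_nhds
    apply h.congr'
    filter_upwards [self_mem_nhdsWithin] with y hy
    have hy0 : y ≠ 0 := hy
    rcases le_or_gt y 0 with h1 | h1
    · simp [slope, mtfMaxsq, max_eq_right h1]
    · simp [slope_def_field, mtfMaxsq, max_eq_left h1.le]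
      field_simp
  · have h : HasDerivAt (fun y : ℝ => y ^ 2) (2 * max x 0) x := by
      simpa [max_eq_left hx.le, mul_comm] using (hasDerivAt_pow 2 x)
    apply h.congr_of_eventuallyEq
    filter_upwards [eventually_gt_nhds hx] with y hy
    simp [mtfMaxsq, max_eq_left hy.le]

lemma mtfMaxsq_contDiff : ContDiff ℝ 1 mtfMaxsq := by
  rw [contDiff_one_iff_deriv]
  refine ⟨fun x => (mtfMaxsq_hasDerivAt x).differentiableAt, ?_⟩
  have : deriv mtfMaxsq = fun x => 2 * max x 0 := funext fun x => (mtfMaxsq_hasDerivAt x).deriv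
  rw [this]
  exact continuous_const.mul (continuous_id.max continuous_const)

lemma mtf_gauss_bound {u : ℝ} (hu : 0 ≤ u) :
    u * Real.exp (-u ^ 2) ≤ 1 / (Real.sqrt 2 * Real.sqrt (Real.exp 1)) := by
  have h1 : u ^ 2 + 1 / 2 ≤ Real.exp (u ^ 2 - 1 / 2) := by
    have := Real.add_one_le_exp (u ^ 2 - 1 / 2)
    linarith
  have hs2 : Real.sqrt 2 ^ 2 = 2 := Real.sq_sqrt (by norm_num)
  have hs2pos : 0 < Real.sqrt 2 := Real.sqrt_pos.mpr (by norm_num)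
  have h2 : Real.sqrt 2 * u ≤ u ^ 2 + 1 / 2 := by
    nlinarith [sq_nonneg (u - Real.sqrt 2 / 2)]
  have hse : Real.sqrt (Real.exp 1) = Real.exp (1 / 2) := (Real.exp_half 1).symm
  have h3 : Real.sqrt 2 * Real.sqrt (Real.exp 1) * u ≤ Real.exp (u ^ 2) := by
    have h4 : Real.exp (u ^ 2 - 1 / 2) * Real.exp (1 / 2) = Real.exp (u ^ 2) := by
      rw [← Real.exp_add]; ring_nf
    have h5 : Real.sqrt 2 * u * Real.exp (1 / 2) ≤ Real.exp (u ^ 2 - 1 / 2) * Real.exp (1 / 2) :=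
      mul_le_mul_of_nonneg_right (le_trans h2 h1) (Real.exp_pos _).le
    rw [hse]; nlinarith [Real.exp_pos (1/2 : ℝ)]
  have hpos : 0 < Real.sqrt 2 * Real.sqrt (Real.exp 1) :=
    mul_pos hs2pos (Real.sqrt_pos.mpr (Real.exp_pos 1))
  rw [Real.exp_neg, ← div_eq_mul_inv, div_le_div_iff₀ (Real.exp_pos _) hpos]
  linarith [h3]

lemma mtf_integral_le_one {T : ℝ} (hT : 0 ≤ T) :
    (∫ t in (0:ℝ)..T, Real.exp (-t ^ 2)) ≤ 1 := by
  have hint : IntegrableOn (fun t : ℝ => Real.exp (-t ^ 2)) (Ioi 0) volume := by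
    have := (integrable_exp_neg_mul_sq (b := 1) one_pos).integrableOn (s := Ioi 0)
    simpa using this
  rw [intervalIntegral.integral_of_le hT]
  calc (∫ t in Ioc (0:ℝ) T, Real.exp (-t ^ 2))
      ≤ ∫ t in Ioi (0:ℝ), Real.exp (-t ^ 2) := by
        apply setIntegral_mono_set hint
        · filter_upwards with t using (Real.exp_pos _).le
        · exact HasSubset.Subset.eventuallyLE Ioc_subset_Ioi_self
    _ = Real.sqrt π / 2 := by
        have := integral_gaussian_Ioi 1
        simpa using this
    _ ≤ 1 := by
        have : Real.sqrt π ≤ 2 := by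
          have := Real.sqrt_le_sqrt Real.pi_le_four
          simpa [Real.sqrt_eq_iff_eq_sq, show Real.sqrt 4 = 2 by
            rw [show (4:ℝ) = 2 ^ 2 by norm_num, Real.sqrt_sq (by norm_num)]] using this
        linarith

theorem modified_target_function_properties (a δ ω : ℝ)
    (ha : 0 < a) (hδ : 0 < δ) (hδω : δ < ω) (hω : ω < 1)
    (F f : ℝ → ℝ)
    (hF : ∀ p, F p = δ * ∫ t in (0:ℝ)..(a * p / δ), Real.exp (-t ^ 2))
    (hf : ∀ p, f p = if p < (1 - ω) / a then a * p
        else (1 - ω) + F (p - (1 - ω) / a)) :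
    ContDiff ℝ 2 f ∧
    (∀ p ∈ Set.Icc (0:ℝ) 1, f p ∈ Set.Icc (0:ℝ) (1 - ω + δ)) ∧
    (1 - ω + δ < 1) ∧
    ConcaveOn ℝ (Set.Icc (0:ℝ) 1) f ∧
    (∀ p ∈ Set.Icc (0:ℝ) 1,
      |deriv (deriv f) p| ≤ a ^ 2 * Real.sqrt 2 / (δ * Real.sqrt (Real.exp 1))) := by
  set c : ℝ := (1 - ω) / a with hc_def
  have hc : 0 < c := div_pos (by linarith) ha
  have hac : a * c = 1 - ω := by
    rw [hc_def]; field_simp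
  set g : ℝ → ℝ := fun s => a * Real.exp (-((a / δ) ^ 2 * mtfMaxsq (s - c))) with hg_def
  have hgpos : ∀ s, 0 < g s := fun s => mul_pos ha (Real.exp_pos _)
  have hginner : ContDiff ℝ 1 fun s : ℝ => -((a / δ) ^ 2 * mtfMaxsq (s - c)) :=
    (contDiff_const.mul (mtfMaxsq_contDiff.comp (contDiff_id.sub contDiff_const))).neg
  have hgC1 : ContDiff ℝ 1 g :=
    contDiff_const.mul (Real.contDiff_exp.comp hginner)
  have hgcont : Continuous g := hgC1.continuous
  set g' : ℝ → ℝ := fun s => g s * -((a / δ) ^ 2 * (2 * max (s - c) 0)) with hg'_def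
  have hgderiv : ∀ s, HasDerivAt g (g' s) s := by
    intro s
    have h1 : HasDerivAt (fun x : ℝ => mtfMaxsq (x - c)) (2 * max (s - c) 0) s := by
      simpa [Function.comp_def] using (mtfMaxsq_hasDerivAt (s - c)).comp s ((hasDerivAt_id s).sub_const c)
    have h2 : HasDerivAt (fun x : ℝ => -((a / δ) ^ 2 * mtfMaxsq (x - c)))
        (-((a / δ) ^ 2 * (2 * max (s - c) 0))) s := (h1.const_mul _).neg
    have h3 := (h2.exp).const_mul a
    have h4 : HasDerivAt g
        (a * (Real.exp (-((a / δ) ^ 2 * mtfMaxsq (s - c))) *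
          -((a / δ) ^ 2 * (2 * max (s - c) 0)))) s := h3
    convert h4 using 1
    rw [hg'_def, hg_def]
    ring
  have hderiv_g : deriv g = g' := funext fun s => (hgderiv s).deriv
  have hrep : ∀ p, f p = ∫ s in (0:ℝ)..p, g s := by
    intro p
    rw [hf p]
    split_ifs with hp
    · have hcong : Set.EqOn g (fun _ => a) (Set.uIcc 0 p) := by
        intro s hs
        have hs1 : s ≤ max 0 p := hs.2
        have hs2 : max 0 p ≤ c := max_le hc.le hp.le
        have hms : max (s - c) 0 = 0 := max_eq_right (by linarith)
        simp [hg_def, mtfMaxsq, hms]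
      rw [intervalIntegral.integral_congr hcong, intervalIntegral.integral_const]
      simp [smul_eq_mul, mul_comm]
    · push_neg at hp
      have hint1 : IntervalIntegrable g volume 0 c := hgcont.intervalIntegrable _ _
      have hint2 : IntervalIntegrable g volume c p := hgcont.intervalIntegrable _ _
      rw [← intervalIntegral.integral_add_adjacent_intervals hint1 hint2]
      have e1 : (∫ s in (0:ℝ)..c, g s) = 1 - ω := by
        have hcong : Set.EqOn g (fun _ => a) (Set.uIcc 0 c) := by
          intro s hs
          have hs1 : s ≤ max 0 c := hs.2
          have hs2 : max 0 c = c := max_eq_right hc.le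
          have hms : max (s - c) 0 = 0 := max_eq_right (by rw [hs2] at hs1; linarith)
          simp [hg_def, mtfMaxsq, hms]
        rw [intervalIntegral.integral_congr hcong, intervalIntegral.integral_const]
        simp [smul_eq_mul]
        linarith [hac]
      have e2 : (∫ s in c..p, g s)
          = δ * ∫ t in (0:ℝ)..(a * (p - c) / δ), Real.exp (-t ^ 2) := by
        have hcong : Set.EqOn g
            (fun s => a * Real.exp (-(a / δ * s + -(a / δ) * c) ^ 2)) (Set.uIcc c p) := by
          intro s hs
          have hs1 : min c p ≤ s := hs.1
          have hs2 : min c p = c := min_eq_left hp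
          have hcs : c ≤ s := by rw [hs2] at hs1; exact hs1
          have hms : max (s - c) 0 = s - c := max_eq_left (by linarith)
          simp only [hg_def, mtfMaxsq, hms]
          congr 1
          ring
        rw [intervalIntegral.integral_congr hcong]
        rw [intervalIntegral.integral_const_mul]
        have hadν : (a / δ) ≠ 0 := ne_of_gt (div_pos ha hδ)
        rw [intervalIntegral.integral_comp_mul_add (fun t => Real.exp (-t ^ 2)) hadν (-(a / δ) * c)]
        have h0 : a / δ * c + -(a / δ) * c = 0 := by ring
        have h1 : a / δ * p + -(a / δ) * c = a * (p - c) / δ := by field_simp; ring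
        rw [h0, h1, smul_eq_mul, ← mul_assoc]
        congr 1
        field_simp
      rw [e1, e2, hF]
  have hfd : ∀ p, HasDerivAt f (g p) p := by
    intro p
    exact ((hgcont.integral_hasStrictDerivAt 0 p).hasDerivAt).congr_of_eventuallyEq
      (Eventually.of_forall fun y => hrep y)
  have hfdiff : Differentiable ℝ f := fun p => (hfd p).differentiableAt
  have hfderiv : deriv f = g := funext fun p => (hfd p).deriv
  have hdd : deriv (deriv f) = g' := by rw [hfderiv, hderiv_g]
  refine ⟨?_, ?_, by linarith, ?_, ?_⟩
  · rw [show (2 : WithTop ℕ∞) = 1 + 1 from rfl, contDiff_succ_iff_deriv]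
    refine ⟨hfdiff, by simp, ?_⟩
    rw [hfderiv]; exact hgC1
  · intro p hp
    constructor
    · rw [hrep p]
      exact intervalIntegral.integral_nonneg hp.1 fun u _ => (hgpos u).le
    · rw [hf p]
      split_ifs with hpc
      · have : a * p ≤ a * c := mul_le_mul_of_nonneg_left hpc.le ha.le
        linarith
      · push_neg at hpc
        rw [hF]
        have hT : 0 ≤ a * (p - c) / δ := by
          apply div_nonneg _ hδ.le
          have : 0 ≤ p - c := by linarith
          positivity
        have := mul_le_mul_of_nonneg_left (mtf_integral_le_one hT) hδ.le
        linarith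
  · apply concaveOn_of_deriv2_nonpos (convex_Icc 0 1) hfdiff.continuous.continuousOn
      hfdiff.differentiableOn
    · rw [hfderiv]; exact (hgC1.differentiable one_ne_zero).differentiableOn
    · intro x _
      have hit : deriv^[2] f x = g' x := by
        show deriv (deriv f) x = g' x
        rw [hdd]
      rw [hit, hg'_def]
      have hnn : 0 ≤ (a / δ) ^ 2 * (2 * max (x - c) 0) := by positivity
      nlinarith [mul_nonneg (hgpos x).le hnn]
  · intro p _
    rw [hdd]
    set m := max (p - c) 0 with hm_def
    have hm0 : 0 ≤ m := le_max_right _ _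
    set u := a / δ * m with hu_def
    have hu0 : 0 ≤ u := mul_nonneg (div_nonneg ha.le hδ.le) hm0
    have harg : -((a / δ) ^ 2 * mtfMaxsq (p - c)) = -u ^ 2 := by
      rw [hu_def, hm_def]; simp only [mtfMaxsq]; ring
    have habs : |g' p| = 2 * (a ^ 2 / δ) * (u * Real.exp (-u ^ 2)) := by
      have hval : g' p = -(2 * (a ^ 2 / δ) * (u * Real.exp (-u ^ 2))) := by
        rw [hg'_def]
        simp only
        rw [hg_def]
        simp only
        rw [harg, hu_def]
        field_simp
        ring
      rw [hval, abs_neg, abs_of_nonneg]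
      positivity
    rw [habs]
    have hb := mtf_gauss_bound hu0
    have hstep : 2 * (a ^ 2 / δ) * (u * Real.exp (-u ^ 2))
        ≤ 2 * (a ^ 2 / δ) * (1 / (Real.sqrt 2 * Real.sqrt (Real.exp 1))) := by
      apply mul_le_mul_of_nonneg_left hb
      positivity
    refine hstep.trans (le_of_eq ?_)
    have hs2 : Real.sqrt 2 * Real.sqrt 2 = 2 := Real.mul_self_sqrt (by norm_num)
    have hse : (0:ℝ) < Real.sqrt (Real.exp 1) := Real.sqrt_pos.mpr (Real.exp_pos 1)
    have hs2p : (0:ℝ) < Real.sqrt 2 := Real.sqrt_pos.mpr (by norm_num)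
    field_simp
    linear_combination (-1 : ℝ) * hs2
end

section
/- Let f : [0,1] → [0,1] be concave with a(n,k) := f(k/n). Then the inequality a(2n,k)·C(2n,k) ≥ ∑_{i=0}^{k} a(n,i)·C(n,i)·C(n,k-i) holds for all n ≥ 1 and 0 ≤ k ≤ 2n, where C(m,j) denotes the binomial coefficient. -/
open Finset

lemma vandermonde_range (m n k : ℕ) :
    ∑ i ∈ Finset.range (k + 1), m.choose i * n.choose (k - i) = (m + n).choose k := by
  rw [Nat.add_choose_eq, Finset.Nat.sum_antidiagonal_eq_sum_range_succ_mk]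

lemma key_mean (n k : ℕ) :
    2 * ∑ i ∈ Finset.range (k + 1), i * (n.choose i * n.choose (k - i))
      = k * (2 * n).choose k := by
  cases k with
  | zero => simp
  | succ l =>
    cases n with
    | zero =>
      have h0 : ∀ i ∈ Finset.range (l + 2), i * (Nat.choose 0 i * Nat.choose 0 (l + 1 - i)) = 0 := by
        intro i hi
        rcases Nat.eq_zero_or_pos i with h | h
        · simp [h]
        · rw [Nat.choose_eq_zero_of_lt h]; ring
      rw [Finset.sum_congr rfl h0]
      simp [Nat.choose_eq_zero_of_lt (by omega : 2 * 0 < l + 1)]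
    | succ m =>
      have hshift :
          ∑ i ∈ Finset.range (l + 2), i * ((m + 1).choose i * (m + 1).choose (l + 1 - i))
            = ∑ j ∈ Finset.range (l + 1),
                (j + 1) * ((m + 1).choose (j + 1) * (m + 1).choose (l - j)) := by
        rw [Finset.sum_range_succ']
        simp
      have hterm : ∀ j, (j + 1) * ((m + 1).choose (j + 1) * (m + 1).choose (l - j))
          = (m + 1) * (m.choose j * (m + 1).choose (l - j)) := by
        intro j
        have := Nat.add_one_mul_choose_eq m j
        calc (j + 1) * ((m + 1).choose (j + 1) * (m + 1).choose (l - j))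
            = ((m + 1).choose (j + 1) * (j + 1)) * (m + 1).choose (l - j) := by ring
          _ = ((m + 1) * m.choose j) * (m + 1).choose (l - j) := by rw [← this]
          _ = (m + 1) * (m.choose j * (m + 1).choose (l - j)) := by ring
      have hsum : ∑ j ∈ Finset.range (l + 1), m.choose j * (m + 1).choose (l - j)
          = (2 * m + 1).choose l := by
        have := vandermonde_range m (m + 1) l
        rwa [show m + (m + 1) = 2 * m + 1 by ring] at this
      have h2 : (2 * m + 2) * (2 * m + 1).choose l = (2 * m + 2).choose (l + 1) * (l + 1) :=
        Nat.add_one_mul_choose_eq (2 * m + 1) l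
      calc 2 * ∑ i ∈ Finset.range (l + 2), i * ((m + 1).choose i * (m + 1).choose (l + 1 - i))
          = 2 * ((m + 1) * ∑ j ∈ Finset.range (l + 1), m.choose j * (m + 1).choose (l - j)) := by
            rw [hshift, Finset.sum_congr rfl (fun j _ => hterm j), ← Finset.mul_sum]
        _ = (2 * m + 2) * (2 * m + 1).choose l := by rw [hsum]; ring
        _ = (l + 1) * (2 * (m + 1)).choose (l + 1) := by
            rw [h2, show 2 * (m + 1) = 2 * m + 2 by ring]; ring

theorem lower_coefficient_inequality (f : ℝ → ℝ)
    (hconc : ConcaveOn ℝ (Set.Icc (0:ℝ) 1) f)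
    (hmap : ∀ x ∈ Set.Icc (0:ℝ) 1, f x ∈ Set.Icc (0:ℝ) 1)
    (n k : ℕ) (hn : 1 ≤ n) (hk : k ≤ 2 * n) :
    ∑ i ∈ Finset.range (k + 1),
        f ((i : ℝ) / (n : ℝ)) * ((n.choose i : ℕ) : ℝ) * ((n.choose (k - i) : ℕ) : ℝ)
      ≤ f ((k : ℝ) / (2 * (n : ℝ))) * (((2 * n).choose k : ℕ) : ℝ) := by
  have hnR : (0:ℝ) < n := by exact_mod_cast hn
  set t : Finset ℕ :=
    (Finset.range (k + 1)).filter (fun i => n.choose i * n.choose (k - i) ≠ 0) with ht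
  set w : ℕ → ℝ := fun i => ((n.choose i : ℕ) : ℝ) * ((n.choose (k - i) : ℕ) : ℝ) with hw
  set p : ℕ → ℝ := fun i => (i : ℝ) / n with hp
  have hC : (0:ℝ) < (((2 * n).choose k : ℕ) : ℝ) := by exact_mod_cast Nat.choose_pos hk
  have hfil : ∀ g : ℕ → ℝ, ∑ i ∈ t, w i • g i = ∑ i ∈ Finset.range (k + 1), w i • g i := by
    intro g
    rw [ht]
    apply Finset.sum_filter_of_ne
    intro i _ hne hz
    apply hne
    have hwz : w i = 0 := by simp only [hw]; exact_mod_cast hz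
    rw [hwz, zero_smul]
  have hwt : ∑ i ∈ t, w i = (((2 * n).choose k : ℕ) : ℝ) := by
    have h1 := hfil (fun _ => (1:ℝ))
    simp only [smul_eq_mul, mul_one] at h1
    rw [h1]
    have := vandermonde_range n n k
    rw [show n + n = 2 * n by ring] at this
    rw [← this]
    push_cast
    rfl
  have hwpos : 0 < ∑ i ∈ t, w i := by rw [hwt]; exact hC
  have hw0 : ∀ i ∈ t, 0 ≤ w i := fun i _ => by rw [hw]; positivity
  have hmem : ∀ i ∈ t, p i ∈ Set.Icc (0:ℝ) 1 := by
    intro i hi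
    rw [ht, Finset.mem_filter] at hi
    have hin : i ≤ n := by
      by_contra h
      exact hi.2 (by rw [Nat.choose_eq_zero_of_lt (by omega)]; ring)
    rw [hp]
    constructor
    · positivity
    · simp only
      rw [div_le_one hnR]
      exact_mod_cast hin
  have hmean : ∑ i ∈ t, w i • p i = (k : ℝ) / (2 * n) * (((2 * n).choose k : ℕ) : ℝ) := by
    rw [hfil p]
    have hcast : (2:ℝ) * ∑ i ∈ Finset.range (k + 1),
        (i : ℝ) * (((n.choose i : ℕ) : ℝ) * ((n.choose (k - i) : ℕ) : ℝ))
        = (k : ℝ) * (((2 * n).choose k : ℕ) : ℝ) := by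
      exact_mod_cast congrArg (fun x : ℕ => (x : ℝ)) (key_mean n k)
    have hstep : ∑ i ∈ Finset.range (k + 1), w i • p i
        = (∑ i ∈ Finset.range (k + 1),
            (i : ℝ) * (((n.choose i : ℕ) : ℝ) * ((n.choose (k - i) : ℕ) : ℝ))) / n := by
      rw [Finset.sum_div]
      apply Finset.sum_congr rfl
      intro i _
      rw [hw, hp, smul_eq_mul]
      field_simp
    rw [hstep]
    have h2 : ∑ i ∈ Finset.range (k + 1),
        (i : ℝ) * (((n.choose i : ℕ) : ℝ) * ((n.choose (k - i) : ℕ) : ℝ))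
        = (k : ℝ) * (((2 * n).choose k : ℕ) : ℝ) / 2 := by linarith
    rw [h2]
    field_simp
  have hjen := hconc.le_map_centerMass hw0 hwpos hmem
  rw [Finset.centerMass, Finset.centerMass, hwt, hmean, smul_eq_mul, smul_eq_mul] at hjen
  have hcm : (((2 * n).choose k : ℕ) : ℝ)⁻¹ * ((k : ℝ) / (2 * n) * (((2 * n).choose k : ℕ) : ℝ))
      = (k : ℝ) / (2 * n) := by field_simp
  rw [hcm] at hjen
  have hLHS : ∑ i ∈ Finset.range (k + 1),
      f ((i : ℝ) / (n : ℝ)) * ((n.choose i : ℕ) : ℝ) * ((n.choose (k - i) : ℕ) : ℝ)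
      = ∑ i ∈ t, w i • (f ∘ p) i := by
    rw [hfil (f ∘ p)]
    apply Finset.sum_congr rfl
    intro i _
    rw [hw, hp, smul_eq_mul, Function.comp]
    ring
  rw [hLHS]
  calc ∑ i ∈ t, w i • (f ∘ p) i
      = (((2 * n).choose k : ℕ) : ℝ) * ((((2 * n).choose k : ℕ) : ℝ)⁻¹ * ∑ i ∈ t, w i • (f ∘ p) i) := by
        field_simp
    _ ≤ (((2 * n).choose k : ℕ) : ℝ) * f ((k : ℝ) / (2 * n)) :=
        mul_le_mul_of_nonneg_left hjen (le_of_lt hC)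
    _ = f ((k : ℝ) / (2 * n)) * (((2 * n).choose k : ℕ) : ℝ) := by ring
end

section
/- Let f : [0,1] → ℝ be twice continuously differentiable with |f''(x)| ≤ C for all x, set b(n,k) = f(k/n) + C/(2n), and let X be hypergeometric with parameters (2n,k,n). Then b(2n,k) ≤ E[b(n,X)]. -/
open Finset


lemma vander (a b n : ℕ) :
    ∑ i ∈ range (n+1), a.choose i * b.choose (n - i) = (a + b).choose n := by
  rw [Nat.add_choose_eq, Finset.Nat.sum_antidiagonal_eq_sum_range_succ_mk]

lemma key1 (k i : ℕ) : (i+1) * k.choose (i+1) = k * (k-1).choose i := by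
  cases k with
  | zero => simp
  | succ k => simpa [Nat.mul_comm] using (Nat.add_one_mul_choose_eq k i).symm

lemma sumB (k m n : ℕ) :
    ∑ i ∈ range (n+2), i * (k.choose i * m.choose (n+1 - i)) = k * ((k-1+m).choose n) := by
  rw [Finset.sum_range_succ']
  simp only [Nat.zero_mul, add_zero, Nat.succ_sub_succ_eq_sub]
  have : ∀ i ∈ range (n+1), (i+1) * (k.choose (i+1) * m.choose (n - i))
      = k * ((k-1).choose i * m.choose (n - i)) := by
    intro i hi
    rw [← Nat.mul_assoc, key1, Nat.mul_assoc]
  rw [Finset.sum_congr rfl this, ← Finset.mul_sum, vander]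

lemma sumC (k m n : ℕ) :
    ∑ i ∈ range (n+3), (i * (i-1)) * (k.choose i * m.choose (n+2 - i)) = k * (k-1) * ((k-2+m).choose n) := by
  rw [Finset.sum_range_succ']
  simp only [Nat.zero_mul, Nat.mul_zero, add_zero, Nat.succ_sub_succ_eq_sub, Nat.sub_zero]
  have : ∀ i ∈ range (n+2), ((i+1) * i) * (k.choose (i+1) * m.choose (n+1 - i))
      = k * (i * ((k-1).choose i * m.choose (n+1 - i))) := by
    intro i hi
    calc ((i+1) * i) * (k.choose (i+1) * m.choose (n+1 - i))
        = i * (((i+1) * k.choose (i+1)) * m.choose (n+1-i)) := by ring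
      _ = i * ((k * (k-1).choose i) * m.choose (n+1-i)) := by rw [key1]
      _ = k * (i * ((k-1).choose i * m.choose (n+1 - i))) := by ring
  rw [Finset.sum_congr rfl this, ← Finset.mul_sum, sumB]
  have h2 : k-1-1 = k-2 := by omega
  rw [h2, Nat.mul_assoc]

-- relation R1
lemma relR1 (n : ℕ) (hn : 1 ≤ n) : (2*n).choose n = 2 * (2*n-1).choose (n-1) := by
  have h := Nat.add_one_mul_choose_eq (2*n-1) (n-1)
  have e1 : 2*n-1+1 = 2*n := by omega
  have e2 : n-1+1 = n := by omega
  rw [e1, e2] at h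
  -- h : 2*n * (2*n-1).choose (n-1) = (2*n).choose n * n
  have := Nat.eq_of_mul_eq_mul_left (show 0 < n by omega)
    (show n * ((2*n).choose n) = n * (2 * (2*n-1).choose (n-1)) by
      calc n * ((2*n).choose n) = (2*n).choose n * n := by ring
        _ = 2*n * (2*n-1).choose (n-1) := h.symm
        _ = n * (2 * (2*n-1).choose (n-1)) := by ring)
  exact this

lemma relR2 (n : ℕ) (hn : 2 ≤ n) : (2*n-1) * (2*n-2).choose (n-2) = (n-1) * (2*n-1).choose (n-1) := by
  have h := Nat.add_one_mul_choose_eq (2*n-2) (n-2)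
  have e1 : 2*n-2+1 = 2*n-1 := by omega
  have e2 : n-2+1 = n-1 := by omega
  rw [e1, e2] at h
  rw [h]; ring

lemma HA (n k : ℕ) (hk : k ≤ 2*n) :
    ∑ i ∈ range (n+1), k.choose i * (2*n - k).choose (n - i) = (2*n).choose n := by
  rw [vander]
  congr 1
  omega

lemma HB (n k : ℕ) (hn : 1 ≤ n) (hk : k ≤ 2*n) :
    2 * ∑ i ∈ range (n+1), i * (k.choose i * (2*n - k).choose (n - i))
      = k * (2*n).choose n := by
  rcases Nat.eq_zero_or_pos k with hk0 | hk1
  · subst hk0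
    rw [Finset.sum_eq_zero, Nat.mul_zero, Nat.zero_mul]
    intro i hi
    cases i with
    | zero => simp
    | succ j => simp [Nat.choose_zero_succ]
  · obtain ⟨n', rfl⟩ : ∃ n', n = n' + 1 := ⟨n - 1, by omega⟩
    have h := sumB k (2*(n'+1) - k) n'
    have e : ∀ i, n' + 1 - i = n' + 1 - i := fun _ => rfl
    rw [h]
    have e1 : k - 1 + (2*(n'+1) - k) = 2*(n'+1) - 1 := by omega
    rw [e1, relR1 (n'+1) (by omega)]
    have e2 : n' + 1 - 1 = n' := by omega
    rw [e2]
    ring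

lemma HC (n k : ℕ) (hn : 1 ≤ n) (hk : k ≤ 2*n) :
    (2*n) * (2*n - 1) * ∑ i ∈ range (n+1), (i * (i-1)) * (k.choose i * (2*n - k).choose (n - i))
      = k * (k-1) * (n * (n-1)) * (2*n).choose n := by
  rcases lt_or_ge k 2 with hk2 | hk2
  · rw [Finset.sum_eq_zero, Nat.mul_zero]
    · have : k * (k-1) = 0 := by rcases (by omega : k = 0 ∨ k = 1) with rfl|rfl <;> simp
      rw [this]; ring
    · intro i hi
      rcases lt_or_ge i 2 with hi2 | hi2
      · have : i * (i - 1) = 0 := by rcases (by omega : i = 0 ∨ i = 1) with rfl|rfl <;> simp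
        rw [this, Nat.zero_mul]
      · have : k.choose i = 0 := Nat.choose_eq_zero_of_lt (by omega)
        rw [this, Nat.zero_mul, Nat.mul_zero]
  rcases lt_or_ge n 2 with hn2 | hn2
  · have hn1 : n = 1 := by omega
    subst hn1
    rw [Finset.sum_eq_zero, Nat.mul_zero]
    · norm_num
    · intro i hi
      simp only [Finset.mem_range] at hi
      interval_cases i <;> simp
  · obtain ⟨n'', rfl⟩ : ∃ n'', n = n'' + 2 := ⟨n - 2, by omega⟩
    set n := n'' + 2 with hndef
    have h := sumC k (2*n - k) n''
    have e0 : n'' + 3 = n + 1 := by omega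
    have e0' : n'' + 2 = n := rfl
    rw [e0, e0'] at h
    rw [h]
    have e1 : k - 2 + (2*n - k) = 2*n - 2 := by omega
    rw [e1]
    have e2 : n'' = n - 2 := by omega
    rw [e2]
    -- goal : (2n)(2n-1) * (k(k-1) * C(2n-2,n-2)) = k(k-1)*(n(n-1))*C(2n,n)
    have r1 := relR1 n (by omega)
    have r2 := relR2 n hn2
    calc (2*n) * (2*n-1) * (k * (k-1) * (2*n-2).choose (n-2))
        = k * (k-1) * (2*n * ((2*n-1) * (2*n-2).choose (n-2))) := by ring
      _ = k * (k-1) * (2*n * ((n-1) * (2*n-1).choose (n-1))) := by rw [r2]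
      _ = k * (k-1) * (n * (n-1) * (2 * (2*n-1).choose (n-1))) := by ring
      _ = k * (k-1) * (n * (n-1) * (2*n).choose n) := by rw [r1]
      _ = k * (k-1) * (n * (n-1)) * (2*n).choose n := by ring

lemma castii (i : ℕ) : ((i*(i-1):ℕ):ℝ) = (i:ℝ)^2 - (i:ℝ) := by
  cases i with
  | zero => simp
  | succ j => push_cast [Nat.succ_sub_one]; ring

lemma varb (n k : ℕ) (hn : 1 ≤ n) (hk : k ≤ 2*n) :
    ∑ i ∈ range (n+1), ((k.choose i * (2*n-k).choose (n-i) : ℕ):ℝ) * (2*(i:ℝ) - k)^2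
      ≤ 2*(n:ℝ) * ((2*n).choose n : ℝ) := by
  set W : ℝ := ((2*n).choose n : ℝ) with hW
  set a1 : ℝ := ((∑ i ∈ range (n+1), i * (k.choose i * (2*n - k).choose (n - i)) : ℕ) : ℝ) with ha1
  set a2 : ℝ := ((∑ i ∈ range (n+1), (i * (i-1)) * (k.choose i * (2*n - k).choose (n - i)) : ℕ) : ℝ) with ha2
  have h1 : 2 * a1 = k * W := by
    rw [ha1, hW]; exact_mod_cast congrArg (Nat.cast : ℕ → ℝ) (HB n k hn hk)
  have h2 : (2*(n:ℝ)) * (2*(n:ℝ)-1) * a2 = ((k:ℝ)^2 - k) * ((n:ℝ)^2 - n) * W := by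
    have := congrArg (Nat.cast : ℕ → ℝ) (HC n k hn hk)
    push_cast [Nat.cast_sub (show 1 ≤ 2*n by omega)] at this
    have ek : (k:ℝ) * ((k-1:ℕ):ℝ) = (k:ℝ)^2 - k := by rw [← Nat.cast_mul, castii]
    have en : (n:ℝ) * ((n-1:ℕ):ℝ) = (n:ℝ)^2 - n := by rw [← Nat.cast_mul, castii]
    rw [ha2, hW]
    push_cast
    rw [this, ← ek, ← en]
  have hS0 : ∑ i ∈ range (n+1), ((k.choose i * (2*n-k).choose (n-i) : ℕ):ℝ) = W := by
    rw [hW]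
    exact_mod_cast congrArg (Nat.cast : ℕ → ℝ) (HA n k hk)
  have expand : ∑ i ∈ range (n+1), ((k.choose i * (2*n-k).choose (n-i) : ℕ):ℝ) * (2*(i:ℝ) - k)^2
      = 4*a2 + (4 - 4*(k:ℝ))*a1 + (k:ℝ)^2 * W := by
    rw [ha1, ha2, ← hS0, Nat.cast_sum, Nat.cast_sum, Finset.mul_sum, Finset.mul_sum, Finset.mul_sum]
    rw [← Finset.sum_add_distrib, ← Finset.sum_add_distrib]
    refine Finset.sum_congr rfl (fun i hi => ?_)
    have eii : ((i*(i-1)*(k.choose i * (2*n-k).choose (n-i)) : ℕ):ℝ)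
        = ((i:ℝ)^2 - i) * ((k.choose i * (2*n-k).choose (n-i) : ℕ):ℝ) := by
      rw [Nat.cast_mul, castii]
    rw [eii]
    push_cast
    ring
  rw [expand]
  have ha1nn : 0 ≤ a1 := by rw [ha1]; positivity
  have ha2nn : 0 ≤ a2 := by rw [ha2]; positivity
  have hWnn : 0 ≤ W := by rw [hW]; positivity
  have hn' : (1:ℝ) ≤ n := by exact_mod_cast hn
  have hk' : (k:ℝ) ≤ 2*n := by exact_mod_cast hk
  have hk0 : (0:ℝ) ≤ k := Nat.cast_nonneg k
  rw [show (4 - 4*(k:ℝ))*a1 = (2 - 2*(k:ℝ))*(2*a1) by ring, h1]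
  have hn0 : (0:ℝ) ≤ n := Nat.cast_nonneg n
  nlinarith [h2, mul_nonneg (mul_nonneg hn0 hWnn) (sq_nonneg ((n:ℝ) - k)), hWnn, ha2nn,
    mul_nonneg hWnn (sq_nonneg ((n:ℝ) - k)), sq_nonneg ((n:ℝ)-1), mul_nonneg hWnn hn0,
    mul_nonneg (mul_nonneg hWnn hn0) hn0]

lemma gconv (f : ℝ → ℝ) (hf : ContDiff ℝ 2 f) (C : ℝ)
    (hC : ∀ x ∈ Set.Icc (0:ℝ) 1, |deriv (deriv f) x| ≤ C) :
    ConvexOn ℝ (Set.Icc (0:ℝ) 1) (fun x => f x + C/2 * x^2) := by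
  have hfd : Differentiable ℝ f := hf.differentiable (by norm_num)
  have h2f : ContDiff ℝ ((1:WithTop ℕ∞)+1) f := by
    have : ((1:WithTop ℕ∞)+1) = 2 := by norm_num
    rw [this]; exact hf
  have hfd1 : Differentiable ℝ (deriv f) :=
    ((contDiff_succ_iff_deriv.mp h2f).2.2).differentiable (by norm_num)
  have hq : ∀ x : ℝ, HasDerivAt (fun y : ℝ => C/2*y^2) (C*x) x := by
    intro x
    have := (hasDerivAt_pow 2 x).const_mul (C/2)
    refine this.congr_deriv ?_
    push_cast; ring
  have hg' : deriv (fun x => f x + C/2 * x^2) = fun x => deriv f x + C*x := by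
    funext x
    exact ((hfd x).hasDerivAt.add (hq x)).deriv
  have hg'' : ∀ x : ℝ, deriv (deriv (fun x => f x + C/2 * x^2)) x = deriv (deriv f) x + C := by
    intro x
    rw [hg']
    exact (((hfd1 x).hasDerivAt).add (by simpa using (hasDerivAt_id x).const_mul C)).deriv
  apply convexOn_of_deriv2_nonneg (convex_Icc 0 1)
  · exact (hfd.continuous.add (by continuity)).continuousOn
  · exact (hfd.add (by fun_prop)).differentiableOn
  · rw [hg']
    exact (hfd1.add (by fun_prop)).differentiableOn
  · intro x hx
    rw [interior_Icc] at hx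
    have h1 := hC x ⟨hx.1.le, hx.2.le⟩
    have h2 : deriv^[2] (fun x => f x + C/2*x^2) x = deriv (deriv f) x + C := hg'' x
    rw [h2]
    have := neg_abs_le (deriv (deriv f) x)
    linarith

theorem upper_coefficient_inequality (f : ℝ → ℝ) (hf : ContDiff ℝ 2 f)
    (C : ℝ) (hC : ∀ x ∈ Set.Icc (0:ℝ) 1, |deriv (deriv f) x| ≤ C)
    (n k : ℕ) (hn : 1 ≤ n) (hk : k ≤ 2 * n)
    (b : ℕ → ℕ → ℝ)
    (hb : ∀ m j, b m j = f ((j : ℝ) / (m : ℝ)) + C / (2 * (m : ℝ))) :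
    b (2 * n) k ≤ ∑ i ∈ Finset.range (n + 1),
      ((k.choose i * (2 * n - k).choose (n - i) : ℕ) : ℝ)
        / (((2 * n).choose n : ℕ) : ℝ) * b n i := by
  have hC0 : 0 ≤ C := le_trans (abs_nonneg _) (hC 0 (by norm_num))
  have hn0 : (0:ℝ) < n := by exact_mod_cast hn
  set W : ℝ := (((2 * n).choose n : ℕ) : ℝ) with hWdef
  have hWpos : 0 < W := by
    rw [hWdef]
    exact_mod_cast Nat.choose_pos (by omega : n ≤ 2*n)
  set w : ℕ → ℝ := fun i => ((k.choose i * (2 * n - k).choose (n - i) : ℕ) : ℝ) with hwdef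
  have hw0 : ∀ i, 0 ≤ w i := fun i => Nat.cast_nonneg _
  set p : ℕ → ℝ := fun i => w i / W with hpdef
  have hp0 : ∀ i ∈ range (n+1), 0 ≤ p i := fun i _ => div_nonneg (hw0 i) hWpos.le
  have hsw : ∑ i ∈ range (n+1), w i = W := by
    rw [hwdef, hWdef]
    beta_reduce
    exact_mod_cast congrArg (Nat.cast : ℕ → ℝ) (HA n k hk)
  have hp1 : ∑ i ∈ range (n+1), p i = 1 := by
    rw [hpdef]
    simp only
    rw [← Finset.sum_div, hsw, div_self hWpos.ne']
  set x : ℕ → ℝ := fun i => (i:ℝ)/n with hxdef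
  have hxmem : ∀ i ∈ range (n+1), x i ∈ Set.Icc (0:ℝ) 1 := by
    intro i hi
    simp only [Finset.mem_range] at hi
    constructor
    · positivity
    · rw [div_le_one hn0]
      exact_mod_cast Nat.lt_succ_iff.mp hi
  set μ : ℝ := (k:ℝ)/(2*n) with hμdef
  -- mean
  have hswi : ∑ i ∈ range (n+1), (i:ℝ) * w i = (k:ℝ) * W / 2 := by
    have := congrArg (Nat.cast : ℕ → ℝ) (HB n k hn hk)
    push_cast at this
    rw [hwdef, hWdef]
    push_cast
    linarith
  have hmean : ∑ i ∈ range (n+1), p i * x i = μ := by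
    have e : ∀ i ∈ range (n+1), p i * x i = ((i:ℝ) * w i) * (1/(W*n)) := by
      intro i hi
      rw [hpdef, hxdef]
      field_simp
    rw [Finset.sum_congr rfl e, ← Finset.sum_mul, hswi, hμdef]
    field_simp
  -- variance
  have hvar : ∑ i ∈ range (n+1), p i * (x i - μ)^2 ≤ 1/(2*n) := by
    have e : ∀ i ∈ range (n+1), p i * (x i - μ)^2
        = (w i * (2*(i:ℝ) - k)^2) * (1/(W * (4*n^2))) := by
      intro i hi
      rw [hpdef, hxdef, hμdef]
      field_simp
      ring
    rw [Finset.sum_congr rfl e, ← Finset.sum_mul]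
    have hv : ∑ i ∈ range (n+1), w i * (2*(i:ℝ) - k)^2 ≤ 2*(n:ℝ)*W := by
      rw [hwdef, hWdef]
      exact varb n k hn hk
    calc (∑ i ∈ range (n+1), w i * (2*(i:ℝ) - k)^2) * (1/(W*(4*(n:ℝ)^2)))
        ≤ (2*(n:ℝ)*W) * (1/(W*(4*(n:ℝ)^2))) := by
          apply mul_le_mul_of_nonneg_right hv
          positivity
      _ = 1/(2*(n:ℝ)) := by field_simp; ring
  -- Jensen
  set g : ℝ → ℝ := fun x => f x + C/2 * x^2 with hgdef
  have hjen := (gconv f hf C hC).map_sum_le hp0 hp1 hxmem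
  rw [show ∑ i ∈ range (n+1), p i • x i = μ by
    simpa [smul_eq_mul] using hmean] at hjen
  simp only [smul_eq_mul] at hjen
  -- expand variance
  have hvar2 : ∑ i ∈ range (n+1), p i * (x i)^2 - μ^2 ≤ 1/(2*n) := by
    have e : ∀ i ∈ range (n+1), p i * (x i - μ)^2
        = p i * (x i)^2 - (2*μ)*(p i * x i) + μ^2 * p i := by
      intro i hi; ring
    rw [Finset.sum_congr rfl e] at hvar
    rw [Finset.sum_add_distrib, Finset.sum_sub_distrib, ← Finset.mul_sum, ← Finset.mul_sum,
      hmean, hp1] at hvar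
    nlinarith [hvar]
  -- conclude
  have key : f μ ≤ ∑ i ∈ range (n+1), p i * f (x i) + C/(4*n) := by
    have hr : ∑ i ∈ range (n+1), p i * (f (x i) + C/2 * (x i)^2)
        = ∑ i ∈ range (n+1), p i * f (x i) + C/2 * ∑ i ∈ range (n+1), p i * (x i)^2 := by
      rw [Finset.mul_sum, ← Finset.sum_add_distrib]
      exact Finset.sum_congr rfl (fun i hi => by ring)
    rw [hr] at hjen
    have : C/2 * (∑ i ∈ range (n+1), p i * (x i)^2 - μ^2) ≤ C/2 * (1/(2*n)) :=
      mul_le_mul_of_nonneg_left hvar2 (by linarith)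
    have e : C/2 * (1/(2*(n:ℝ))) = C/(4*(n:ℝ)) := by ring
    nlinarith [this]
  -- final
  have hL : b (2*n) k = f μ + C/(4*n) := by
    rw [hb]
    have e1 : ((2*n : ℕ):ℝ) = 2*(n:ℝ) := by push_cast; ring
    rw [e1, ← hμdef]
    congr 1
    ring
  have hR : ∑ i ∈ range (n+1), w i / W * b n i
      = ∑ i ∈ range (n+1), p i * f (x i) + C/(2*n) := by
    have e : ∀ i ∈ range (n+1), w i / W * b n i = p i * f (x i) + (C/(2*n)) * p i := by
      intro i hi
      rw [hb, hpdef, hxdef]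
      ring
    rw [Finset.sum_congr rfl e, Finset.sum_add_distrib, ← Finset.mul_sum, hp1, mul_one]
  calc b (2*n) k = f μ + C/(4*n) := hL
    _ ≤ ∑ i ∈ range (n+1), p i * f (x i) + C/(4*n) + C/(4*n) := by linarith [key]
    _ = ∑ i ∈ range (n+1), p i * f (x i) + C/(2*n) := by ring
    _ = ∑ i ∈ range (n+1), w i / W * b n i := hR.symm
end

section
/- Conditional on T = n, let K be the number of independent simulations of a split chain needed before obtaining a run with δ_1 = ⋯ = δ_{n-1} = 0 (a draw from Q_n). Then K | T = n is geometric with E(K | T = n) = 1/P(τ ≥ n). If P(T = n) = P(τ ≥ n)/E(τ), then E(K) = ∑_n P(T = n)/P(τ ≥ n) = ∞ whenever τ has unbounded support. -/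
open MeasureTheory

theorem expected_attempts_infinite {Ω : Type*} [MeasurableSpace Ω]
    (μ : Measure Ω) [IsProbabilityMeasure μ]
    (τ : Ω → ℕ) (hpos : ∀ ω, 1 ≤ τ ω)
    (hint : Integrable (fun ω => (τ ω : ℝ)) μ)
    (hub : ∀ n : ℕ, 0 < μ {ω | n ≤ τ ω})
    (q : ℕ → ℝ) (hq : ∀ n, q n = (μ {ω | n ≤ τ ω}).toReal)
    (pT : ℕ → ℝ) (hpT : ∀ n, pT n = q n / ∫ ω, (τ ω : ℝ) ∂μ) :
    (∀ n : ℕ, 1 ≤ n →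
      ∑' k : ℕ, ((k : ℝ) + 1) * (1 - q n) ^ k * q n = 1 / q n) ∧
    ¬ Summable (fun n : ℕ => pT (n + 1) / q (n + 1)) := by
  have hq_pos : ∀ n, 0 < q n := by
    intro n
    rw [hq n]
    exact ENNReal.toReal_pos (hub n).ne' (measure_ne_top μ _)
  have hq_le : ∀ n, q n ≤ 1 := by
    intro n
    rw [hq n]
    have := prob_le_one (μ := μ) (s := {ω | n ≤ τ ω})
    calc (μ {ω | n ≤ τ ω}).toReal ≤ (1 : ENNReal).toReal :=
          ENNReal.toReal_mono ENNReal.one_ne_top this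
      _ = 1 := ENNReal.toReal_one
  constructor
  · intro n _
    set x := 1 - q n with hx
    have hx0 : 0 ≤ x := by simp [hx]; exact hq_le n
    have hx1 : x < 1 := by simp [hx]; exact hq_pos n
    have hnorm : ‖x‖ < 1 := by rw [Real.norm_eq_abs, abs_of_nonneg hx0]; exact hx1
    have h1 : HasSum (fun k : ℕ => (k : ℝ) * x ^ k) (x / (1 - x) ^ 2) :=
      hasSum_coe_mul_geometric_of_norm_lt_one hnorm
    have h2 : HasSum (fun k : ℕ => x ^ k) (1 - x)⁻¹ :=
      hasSum_geometric_of_lt_one hx0 hx1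
    have h3 := (h1.add h2).mul_right (q n)
    have heq : (fun k : ℕ => ((k : ℝ) * x ^ k + x ^ k) * q n)
        = fun k : ℕ => ((k : ℝ) + 1) * x ^ k * q n := by
      funext k; ring
    rw [heq] at h3
    rw [h3.tsum_eq]
    have hqn := (hq_pos n).ne'
    have h1x : 1 - x = q n := by simp [hx]
    rw [h1x]
    field_simp
    ring_nf
    linarith
  · have hE : (1 : ℝ) ≤ ∫ ω, (τ ω : ℝ) ∂μ := by
      have : ∫ ω, (1 : ℝ) ∂μ ≤ ∫ ω, (τ ω : ℝ) ∂μ := by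
        apply integral_mono (integrable_const 1) hint
        intro ω
        show (1 : ℝ) ≤ (τ ω : ℝ)
        exact_mod_cast hpos ω
      simpa using this
    have hEpos : (0 : ℝ) < ∫ ω, (τ ω : ℝ) ∂μ := lt_of_lt_of_le one_pos hE
    have hconst : (fun n : ℕ => pT (n + 1) / q (n + 1))
        = fun _ : ℕ => (∫ ω, (τ ω : ℝ) ∂μ)⁻¹ := by
      funext n
      rw [hpT, div_right_comm, div_self (hq_pos (n + 1)).ne', one_div]
    rw [hconst]
    intro hs
    have := (summable_const_iff ((∫ ω, (τ ω : ℝ) ∂μ)⁻¹)).mp hs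
    exact (inv_ne_zero hEpos.ne') this
end

section
/- Consider the Markov transition defined by: given μ', draw θ ~ InverseGamma((m-1)/2, m(s² + (ȳ - μ')²)/2) and then μ | θ ~ Normal(ȳ, θ/m), where m ≥ 5, s² > 0 and ȳ ∈ ℝ are fixed. Let V(θ, μ) = 1 + (μ - ȳ)². Then E[V(θ, μ) | μ'] = (1 + (μ' - ȳ)²)/(m-3) + (s² + m - 4)/(m-3). Consequently, for any λ ∈ (1/(m-3), 1), with b = (s² + m - 4)/(m-3), d ≥ b/(λ - 1/(m-3)), and C = {(θ,μ) : V(θ,μ) ≤ d}, the drift inequality E[V(θ,μ) | μ'] ≤ λ V(θ', μ') + b·1_{(θ',μ') ∈ C} holds for all (θ', μ'). -/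
open MeasureTheory

/-- Density of the inverse gamma distribution with shape `a` and rate `b`. -/
noncomputable def igDensity (a b x : ℝ) : ℝ :=
  if 0 < x then b ^ a / Real.Gamma a * x ^ (-(a + 1)) * Real.exp (-b / x) else 0

/-- The inverse gamma distribution with shape `a` and rate `b`. -/
noncomputable def igMeasure (a b : ℝ) : Measure ℝ :=
  volume.withDensity fun x => ENNReal.ofReal (igDensity a b x)

open Real Set ProbabilityTheory
open scoped NNReal ENNReal

set_option maxHeartbeats 1000000

lemma ig_integral {c t : ℝ} (hc : 0 < c) (ht : 0 < t) :
    ∫ x in Ioi (0:ℝ), x ^ (-t - 1) * Real.exp (-c / x) = (1/c) ^ t * Real.Gamma t := by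
  have h := integral_comp_rpow_Ioi (fun y => y ^ (t - 1) * Real.exp (-(c * y))) (p := -1)
    (by norm_num)
  rw [← Real.integral_rpow_mul_exp_neg_mul_Ioi ht hc, ← h]
  refine setIntegral_congr_fun measurableSet_Ioi (fun x hx => ?_)
  have hx0 : (0:ℝ) < x := hx
  rw [smul_eq_mul]
  rw [show (-1:ℝ) - 1 = -2 by norm_num, abs_neg, abs_one, one_mul,
    Real.rpow_neg_one]
  rw [Real.inv_rpow hx0.le, ← Real.rpow_neg hx0.le, ← mul_assoc, ← Real.rpow_add hx0]
  ring_nf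

lemma ig_integrable {c t : ℝ} (hc : 0 < c) (ht : 0 < t) :
    IntegrableOn (fun x : ℝ => x ^ (-t - 1) * Real.exp (-c / x)) (Ioi 0) := by
  have hg : IntegrableOn (fun y : ℝ => y ^ (t - 1) * Real.exp (-c * y)) (Ioi 0) := by
    have := integrableOn_rpow_mul_exp_neg_mul_rpow (p := 1) (s := t - 1) (b := c)
      (by linarith) one_pos hc
    refine this.congr_fun (fun x hx => ?_) measurableSet_Ioi
    beta_reduce
    rw [Real.rpow_one]
  have himg : (fun x : ℝ => x⁻¹) '' Ioi 0 = Ioi 0 := by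
    ext x
    simp only [mem_image, mem_Ioi]
    constructor
    · rintro ⟨y, hy, rfl⟩; positivity
    · intro hx; exact ⟨x⁻¹, by positivity, inv_inv x⟩
  have hderiv : ∀ x ∈ Ioi (0:ℝ), HasDerivWithinAt (fun x : ℝ => x⁻¹) (-(x^2)⁻¹) (Ioi 0) x :=
    fun x hx => (hasDerivAt_inv (ne_of_gt hx)).hasDerivWithinAt
  have hinj : InjOn (fun x : ℝ => x⁻¹) (Ioi 0) := fun x hx y hy h => by
    simpa using congrArg (·⁻¹) h
  have := (integrableOn_image_iff_integrableOn_abs_deriv_smul measurableSet_Ioi hderiv hinj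
    (fun y : ℝ => y ^ (t - 1) * Real.exp (-c * y))).mp (by rwa [himg])
  refine this.congr_fun (fun x hx => ?_) measurableSet_Ioi
  have hx0 : (0:ℝ) < x := hx
  beta_reduce
  rw [smul_eq_mul, abs_neg, abs_inv, abs_of_nonneg (by positivity : (0:ℝ) ≤ x^2),
    Real.inv_rpow hx0.le, ← Real.rpow_neg hx0.le]
  rw [show (x^2)⁻¹ = x ^ (-2:ℝ) by
    rw [← Real.rpow_natCast x 2, ← Real.rpow_neg hx0.le]; norm_num]
  rw [← mul_assoc, ← Real.rpow_add hx0]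
  ring_nf

lemma sq_gauss_integral {b : ℝ} (hb : 0 < b) :
    ∫ x : ℝ, x ^ 2 * Real.exp (-b * x ^ 2) = b ^ (-(3:ℝ)/2) * (Real.sqrt π / 2) := by
  have h2 : ∫ x : ℝ, x ^ 2 * Real.exp (-b * x ^ 2)
      = 2 * ∫ x in Ioi (0:ℝ), x ^ 2 * Real.exp (-b * x ^ 2) := by
    rw [← integral_comp_abs (f := fun x => x ^ 2 * Real.exp (-b * x ^ 2))]
    congr 1; ext x; rw [sq_abs]
  have h3 : ∫ x in Ioi (0:ℝ), x ^ 2 * Real.exp (-b * x ^ 2)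
      = b ^ (-(2+1)/2 : ℝ) * (1/2) * Real.Gamma ((2+1)/2) := by
    rw [← integral_rpow_mul_exp_neg_mul_rpow (p := 2) (q := 2) (by norm_num) (by norm_num) hb]
    refine setIntegral_congr_fun measurableSet_Ioi (fun x hx => ?_)
    rw [← Real.rpow_natCast x 2]
    norm_num
  have hG : Real.Gamma ((2+1)/2 : ℝ) = Real.sqrt π / 2 := by
    rw [show ((2+1)/2 : ℝ) = 1/2 + 1 by norm_num, Real.Gamma_add_one (by norm_num),
      Real.Gamma_one_half_eq]
    ring
  rw [h2, h3, hG]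
  norm_num
  ring

lemma gauss_moment (μ : ℝ) (v : ℝ≥0) :
    ∫ x, (1 + (x - μ) ^ 2) ∂(ProbabilityTheory.gaussianReal μ v) = 1 + (v : ℝ) := by
  by_cases hv : v = 0
  · simp [hv]
  rw [gaussianReal_of_var_ne_zero _ hv]
  have hmeas : Measurable fun x => (gaussianPDFReal μ v x).toNNReal :=
    (measurable_gaussianPDFReal μ v).real_toNNReal
  have hd : (gaussianPDF μ v) = fun x => ((gaussianPDFReal μ v x).toNNReal : ℝ≥0∞) := rfl
  rw [hd, integral_withDensity_eq_integral_smul hmeas]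
  have hcongr : ∀ x : ℝ, (gaussianPDFReal μ v x).toNNReal • (1 + (x - μ) ^ 2)
      = gaussianPDFReal μ v x * 1 + gaussianPDFReal μ v x * (x - μ)^2 := by
    intro x
    rw [NNReal.smul_def, Real.coe_toNNReal _ (gaussianPDFReal_nonneg μ v x), smul_eq_mul]
    ring
  simp_rw [hcongr]
  have hv' : (0:ℝ) < (v:ℝ) := lt_of_le_of_ne (v.coe_nonneg) (by exact_mod_cast (Ne.symm hv))
  set b : ℝ := (2 * (v:ℝ))⁻¹ with hbdef
  have hb : 0 < b := by positivity
  have hexp : ∀ y : ℝ, Real.exp (-y ^ 2 / (2 * (v:ℝ))) = Real.exp (-b * y ^ 2) := by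
    intro y; congr 1; rw [hbdef]; field_simp
  have hint0 : Integrable (fun y : ℝ => y ^ 2 * Real.exp (-b * y ^ 2)) := by
    have hs : (-1:ℝ) < 2 := by norm_num
    have := integrable_rpow_mul_exp_neg_mul_sq (b := b) hb hs
    refine this.congr (Filter.Eventually.of_forall fun x => ?_)
    beta_reduce
    rw [← Real.rpow_natCast x 2]; norm_num
  have hint2 : Integrable (fun x => gaussianPDFReal μ v x * (x - μ)^2) := by
    simp only [gaussianPDFReal]
    have : Integrable (fun x : ℝ => (√(2 * π * v))⁻¹ *
        ((x - μ) ^ 2 * Real.exp (-b * (x - μ) ^ 2))) :=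
      (hint0.comp_sub_right μ).const_mul _
    refine this.congr (Filter.Eventually.of_forall fun x => ?_)
    beta_reduce
    rw [← hexp]; ring
  have hint1 : Integrable (fun x => gaussianPDFReal μ v x * 1) := by
    simpa using integrable_gaussianPDFReal μ v
  rw [integral_add hint1 hint2, integral_mul_const]
  rw [integral_gaussianPDFReal_eq_one μ hv, one_mul]
  congr 1
  calc ∫ x, gaussianPDFReal μ v x * (x - μ) ^ 2
      = ∫ x, (√(2 * π * v))⁻¹ * ((x - μ) ^ 2 * Real.exp (-b * (x - μ) ^ 2)) := by
        congr 1; ext x; rw [gaussianPDFReal, ← hexp]; ring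
    _ = (√(2 * π * v))⁻¹ * ∫ x, x ^ 2 * Real.exp (-b * x ^ 2) := by
        rw [integral_const_mul,
          integral_sub_right_eq_self (fun y => y ^ 2 * Real.exp (-b * y ^ 2)) μ]
    _ = (√(2 * π * v))⁻¹ * (b ^ (-(3:ℝ)/2) * (Real.sqrt π / 2)) := by
        rw [sq_gauss_integral hb]
    _ = (v:ℝ) := by
        have hb32 : b ^ (-(3:ℝ)/2) = (2*(v:ℝ)) * Real.sqrt (2*(v:ℝ)) := by
          rw [hbdef, Real.inv_rpow (by positivity), ← Real.rpow_neg (by positivity)]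
          norm_num
          rw [show (3:ℝ)/2 = 1 + 1/2 by norm_num, Real.rpow_add (by positivity),
            Real.rpow_one, ← Real.sqrt_eq_rpow, Real.sqrt_mul (by norm_num : (0:ℝ) ≤ 2)]
        have hsq : Real.sqrt (2 * π * (v:ℝ)) = Real.sqrt (2*(v:ℝ)) * Real.sqrt π := by
          rw [show 2 * π * (v:ℝ) = (2*(v:ℝ)) * π by ring, Real.sqrt_mul (by positivity)]
        rw [hb32, hsq]
        have h1 : Real.sqrt (2*(v:ℝ)) ≠ 0 := by positivity
        have h2 : Real.sqrt π ≠ 0 := by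
          have := Real.pi_pos; positivity
        field_simp

lemma ig_mean {a c m : ℝ} (hc : 0 < c) (ha : 2 ≤ a) (hm : 0 < m) :
    ∫ θ, (1 + ((θ/m).toNNReal : ℝ)) ∂(igMeasure a c) = 1 + c/(m*(a-1)) := by
  have hmeasD : Measurable fun x => (igDensity a c x).toNNReal := by
    apply Measurable.real_toNNReal
    have hform : igDensity a c = (Ioi (0:ℝ)).indicator
        (fun x => c ^ a / Real.Gamma a * Real.exp (Real.log x * (-(a+1))) *
          Real.exp (-c / x)) := by
      funext x
      unfold igDensity
      by_cases hx : (0:ℝ) < x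
      · rw [if_pos hx, indicator_of_mem (mem_Ioi.mpr hx), Real.rpow_def_of_pos hx]
      · rw [if_neg hx, indicator_of_notMem (by simpa using hx)]
    rw [hform]
    have m1 : Measurable fun x : ℝ => Real.exp (Real.log x * (-(a+1))) :=
      (Real.measurable_log.mul measurable_const).exp
    have m2 : Measurable fun x : ℝ => Real.exp (-c / x) := by fun_prop
    exact Measurable.indicator ((m1.const_mul _).mul m2) measurableSet_Ioi
  have hK : (0:ℝ) < c ^ a / Real.Gamma a := by
    have := Real.Gamma_pos_of_pos (by linarith : (0:ℝ) < a)
    positivity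
  set K : ℝ := c ^ a / Real.Gamma a with hKdef
  have hig : igMeasure a c = volume.withDensity fun x => ((igDensity a c x).toNNReal : ℝ≥0∞) :=
    rfl
  rw [hig, integral_withDensity_eq_integral_smul hmeasD]
  have hzero : ∀ x : ℝ, x ∉ Ioi (0:ℝ) →
      (igDensity a c x).toNNReal • (1 + ((x/m).toNNReal : ℝ)) = 0 := by
    intro x hx
    have hx' : ¬ (0:ℝ) < x := by simpa using hx
    have : igDensity a c x = 0 := by unfold igDensity; rw [if_neg hx']
    simp [this]
  rw [← setIntegral_eq_integral_of_forall_compl_eq_zero hzero]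
  have hcongr : ∀ x ∈ Ioi (0:ℝ),
      (igDensity a c x).toNNReal • (1 + ((x/m).toNNReal : ℝ))
      = K * (x ^ (-a - 1) * Real.exp (-c / x))
        + (K / m) * (x ^ (-(a-1) - 1) * Real.exp (-c / x)) := by
    intro x hx
    have hx0 : (0:ℝ) < x := hx
    have hD : igDensity a c x = K * x ^ (-(a+1)) * Real.exp (-c / x) := by
      unfold igDensity; rw [if_pos hx0]
    have hDnn : 0 ≤ igDensity a c x := by
      rw [hD]; positivity
    rw [NNReal.smul_def, Real.coe_toNNReal _ hDnn, smul_eq_mul, hD,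
      Real.coe_toNNReal _ (by positivity : (0:ℝ) ≤ x / m)]
    have hx1 : x ^ (-(a-1) - 1) = x * x ^ (-(a+1)) := by
      rw [show -(a-1) - 1 = 1 + (-(a+1)) by ring, Real.rpow_add hx0, Real.rpow_one]
    rw [hx1, show -a - 1 = -(a+1) by ring]
    field_simp
  rw [setIntegral_congr_fun measurableSet_Ioi hcongr]
  have hi1 : IntegrableOn (fun x : ℝ => K * (x ^ (-a - 1) * Real.exp (-c / x))) (Ioi 0) :=
    (ig_integrable hc (by linarith : (0:ℝ) < a)).const_mul K
  have hi2 : IntegrableOn (fun x : ℝ => (K / m) * (x ^ (-(a-1) - 1) * Real.exp (-c / x)))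
      (Ioi 0) := (ig_integrable hc (by linarith : (0:ℝ) < a - 1)).const_mul (K / m)
  rw [integral_add hi1 hi2, integral_const_mul, integral_const_mul,
    ig_integral hc (by linarith : (0:ℝ) < a),
    ig_integral hc (by linarith : (0:ℝ) < a - 1)]
  have hGa : Real.Gamma a = (a - 1) * Real.Gamma (a - 1) := by
    have := Real.Gamma_add_one (s := a - 1) (by linarith)
    rw [show a - 1 + 1 = a by ring] at this
    exact this
  have hG1 : 0 < Real.Gamma (a - 1) := Real.Gamma_pos_of_pos (by linarith)
  have hcp1 : (1/c) ^ a = (c ^ a)⁻¹ := by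
    rw [one_div, Real.inv_rpow hc.le]
  have hcp2 : c ^ a = c * c ^ (a - 1) := by
    have h := Real.rpow_add hc 1 (a-1)
    rw [show (1:ℝ) + (a-1) = a by ring, Real.rpow_one] at h
    exact h
  have hcp3 : (1/c) ^ (a-1) = (c ^ (a-1))⁻¹ := by
    rw [one_div, Real.inv_rpow hc.le]
  have hca : (0:ℝ) < c ^ a := Real.rpow_pos_of_pos hc a
  have hca1 : (0:ℝ) < c ^ (a-1) := Real.rpow_pos_of_pos hc (a-1)
  rw [hKdef, hcp1, hcp3, hcp2, hGa]
  have hG0 : Real.Gamma (a-1) ≠ 0 := ne_of_gt hG1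
  have hca1' : c ^ (a-1) ≠ 0 := ne_of_gt hca1
  have ha1 : a - 1 ≠ 0 := by linarith
  field_simp

theorem gibbs_toy_drift (m s2 ybar : ℝ) (hm : 5 ≤ m) (hs2 : 0 < s2)
    (V : ℝ → ℝ → ℝ) (hV : ∀ θ x, V θ x = 1 + (x - ybar) ^ 2)
    (Ecur : ℝ → ℝ)
    (hE : ∀ μ', Ecur μ' =
      ∫ θ, (∫ x, V θ x ∂(ProbabilityTheory.gaussianReal ybar (Real.toNNReal (θ / m))))
        ∂(igMeasure ((m - 1) / 2) (m * (s2 + (ybar - μ') ^ 2) / 2))) :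
    (∀ μ', Ecur μ' = (1 + (μ' - ybar) ^ 2) / (m - 3) + (s2 + m - 4) / (m - 3)) ∧
    (∀ lam : ℝ, 1 / (m - 3) < lam → lam < 1 →
      ∀ b : ℝ, b = (s2 + m - 4) / (m - 3) →
      ∀ d : ℝ, b / (lam - 1 / (m - 3)) ≤ d →
      ∀ θ' μ' : ℝ,
        Ecur μ' ≤ lam * V θ' μ' + (if V θ' μ' ≤ d then b else 0)) := by
  have hm0 : (0:ℝ) < m := by linarith
  have hm3 : (0:ℝ) < m - 3 := by linarith
  have part1 : ∀ μ', Ecur μ' = (1 + (μ' - ybar) ^ 2) / (m - 3) + (s2 + m - 4) / (m - 3) := by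
    intro μ'
    rw [hE μ']
    simp_rw [hV]
    simp_rw [gauss_moment ybar]
    have hc : (0:ℝ) < m * (s2 + (ybar - μ') ^ 2) / 2 := by positivity
    have ha : (2:ℝ) ≤ (m - 1) / 2 := by linarith
    rw [ig_mean hc ha hm0]
    have hne : m - 3 ≠ 0 := ne_of_gt hm3
    have hmne : m ≠ 0 := ne_of_gt hm0
    rw [show m * ((m - 1) / 2 - 1) = m * (m - 3) / 2 by ring]
    have hden : m * (m - 3) / 2 ≠ 0 := by
      intro h
      rcases mul_eq_zero.mp (by linarith [h] : m * (m - 3) = 0) with h' | h'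
      · exact hmne h'
      · exact hne h'
    have key : m * (s2 + (ybar - μ') ^ 2) / 2 / (m * (m - 3) / 2)
        = (s2 + (ybar - μ') ^ 2) / (m - 3) := by
      rw [div_div, div_eq_div_iff (by exact mul_ne_zero two_ne_zero hden) hne]
      ring
    rw [key]
    field_simp
    ring
  refine ⟨part1, ?_⟩
  intro lam hlam1 hlam2 b hb d hd θ' μ'
  rw [part1 μ', hV θ' μ']
  set t : ℝ := 1 + (μ' - ybar) ^ 2 with htdef
  have ht : 1 ≤ t := by nlinarith [sq_nonneg (μ' - ybar)]
  have hδ : 0 < lam - 1 / (m - 3) := by linarith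
  have hgoal : (1 + (μ' - ybar) ^ 2) / (m - 3) = t / (m - 3) := by rw [htdef]
  rw [hgoal, hb]
  have hrw : t / (m - 3) = t * (1 / (m - 3)) := by ring
  split_ifs with h
  · have key : (1 / (m - 3)) * t ≤ lam * t :=
      mul_le_mul_of_nonneg_right hlam1.le (by linarith)
    linarith [hrw, key]
  · push_neg at h
    rw [← hb] at *
    have h1 : b ≤ d * (lam - 1 / (m - 3)) := (div_le_iff₀ hδ).mp hd
    have h2 : d * (lam - 1 / (m - 3)) ≤ t * (lam - 1 / (m - 3)) :=
      mul_le_mul_of_nonneg_right h.le hδ.le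
    nlinarith [h1, h2, hrw]
end

section
/- Two inverse gamma densities with common shape parameter a > 0 and distinct rate parameters b₁ > b₂ > 0, i.e. g_i(x) = b_i^a/Γ(a) · x^{-a-1} e^{-b_i/x} for x > 0, intersect at exactly one point x* = (b₁ - b₂)/(a·(log b₁ - log b₂)); moreover g₁(x) ≥ g₂(x) for x ≥ x* and g₁(x) ≤ g₂(x) for x ≤ x*. -/
theorem inverse_gamma_densities_cross (a b₁ b₂ : ℝ)
    (ha : 0 < a) (hb2 : 0 < b₂) (hb : b₂ < b₁)
    (g₁ g₂ : ℝ → ℝ)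
    (hg₁ : ∀ x, 0 < x → g₁ x = b₁ ^ a / Real.Gamma a * x ^ (-a - 1) * Real.exp (-b₁ / x))
    (hg₂ : ∀ x, 0 < x → g₂ x = b₂ ^ a / Real.Gamma a * x ^ (-a - 1) * Real.exp (-b₂ / x))
    (xstar : ℝ) (hx : xstar = (b₁ - b₂) / (a * (Real.log b₁ - Real.log b₂))) :
    (∀ x : ℝ, 0 < x → (g₁ x = g₂ x ↔ x = xstar)) ∧
    (∀ x : ℝ, xstar ≤ x → g₂ x ≤ g₁ x) ∧
    (∀ x : ℝ, 0 < x → x ≤ xstar → g₁ x ≤ g₂ x) := by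
  have hb1 : 0 < b₁ := hb2.trans hb
  have hΓ : 0 < Real.Gamma a := Real.Gamma_pos_of_pos ha
  have hL : 0 < Real.log b₁ - Real.log b₂ := by
    have := Real.log_lt_log hb2 hb
    linarith
  have haL : 0 < a * (Real.log b₁ - Real.log b₂) := mul_pos ha hL
  have hD : 0 < b₁ - b₂ := by linarith
  have hxs : 0 < xstar := by rw [hx]; positivity
  -- key lemma
  have hq1 : ∀ x : ℝ, 0 < x → -b₁ / x * x = -b₁ := fun x hx0 => div_mul_cancel₀ _ hx0.ne'
  have hq2 : ∀ x : ℝ, 0 < x → -b₂ / x * x = -b₂ := fun x hx0 => div_mul_cancel₀ _ hx0.ne'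
  have key : ∀ x : ℝ, 0 < x → (g₁ x ≤ g₂ x ↔ x ≤ xstar) := by
    intro x hx0
    rw [hg₁ x hx0, hg₂ x hx0]
    have hc : 0 < x ^ (-a - 1) / Real.Gamma a := by
      have := Real.rpow_pos_of_pos hx0 (-a - 1); positivity
    have e1 : b₁ ^ a / Real.Gamma a * x ^ (-a - 1) * Real.exp (-b₁ / x)
        = x ^ (-a - 1) / Real.Gamma a * (b₁ ^ a * Real.exp (-b₁ / x)) := by ring
    have e2 : b₂ ^ a / Real.Gamma a * x ^ (-a - 1) * Real.exp (-b₂ / x)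
        = x ^ (-a - 1) / Real.Gamma a * (b₂ ^ a * Real.exp (-b₂ / x)) := by ring
    rw [e1, e2, mul_le_mul_iff_right₀ hc]
    have hf1 : 0 < b₁ ^ a * Real.exp (-b₁ / x) := by positivity
    have hf2 : 0 < b₂ ^ a * Real.exp (-b₂ / x) := by positivity
    rw [← Real.log_le_log_iff hf1 hf2,
        Real.log_mul (by positivity) (Real.exp_ne_zero _),
        Real.log_mul (by positivity) (Real.exp_ne_zero _),
        Real.log_rpow hb1, Real.log_rpow hb2, Real.log_exp, Real.log_exp,
        hx, le_div_iff₀ haL, ← mul_le_mul_iff_left₀ hx0]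
    constructor
    · intro h
      nlinarith [hq1 x hx0, hq2 x hx0]
    · intro h
      nlinarith [hq1 x hx0, hq2 x hx0]
  have key2 : ∀ x : ℝ, 0 < x → (g₂ x ≤ g₁ x ↔ xstar ≤ x) := by
    intro x hx0
    rw [hg₁ x hx0, hg₂ x hx0]
    have hc : 0 < x ^ (-a - 1) / Real.Gamma a := by
      have := Real.rpow_pos_of_pos hx0 (-a - 1); positivity
    have e1 : b₁ ^ a / Real.Gamma a * x ^ (-a - 1) * Real.exp (-b₁ / x)
        = x ^ (-a - 1) / Real.Gamma a * (b₁ ^ a * Real.exp (-b₁ / x)) := by ring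
    have e2 : b₂ ^ a / Real.Gamma a * x ^ (-a - 1) * Real.exp (-b₂ / x)
        = x ^ (-a - 1) / Real.Gamma a * (b₂ ^ a * Real.exp (-b₂ / x)) := by ring
    rw [e1, e2, mul_le_mul_iff_right₀ hc]
    have hf1 : 0 < b₁ ^ a * Real.exp (-b₁ / x) := by positivity
    have hf2 : 0 < b₂ ^ a * Real.exp (-b₂ / x) := by positivity
    rw [← Real.log_le_log_iff hf2 hf1,
        Real.log_mul (by positivity) (Real.exp_ne_zero _),
        Real.log_mul (by positivity) (Real.exp_ne_zero _),
        Real.log_rpow hb1, Real.log_rpow hb2, Real.log_exp, Real.log_exp,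
        hx, div_le_iff₀ haL, ← mul_le_mul_iff_left₀ hx0]
    constructor
    · intro h
      nlinarith [hq1 x hx0, hq2 x hx0]
    · intro h
      nlinarith [hq1 x hx0, hq2 x hx0]
  refine ⟨?_, ?_, ?_⟩
  · intro x hx0
    constructor
    · intro h
      exact le_antisymm ((key x hx0).mp h.le) ((key2 x hx0).mp h.ge)
    · intro h
      exact le_antisymm ((key x hx0).mpr h.le) ((key2 x hx0).mpr h.ge)
  · intro x hxx
    exact (key2 x (hxs.trans_le hxx)).mpr hxx
  · intro x hx0 hxx
    exact (key x hx0).mpr hxx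
end
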